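/- Let a_1, a_2, a_3 > 0 satisfy (a_2 a_3 / a_1)·λ > 1 for every eigenvalue λ of Q_S for every nonempty S ⊆ V. Define the set function f_3 on subsets of V by f_3(∅) = 0 and, for nonempty S, f_3(S) = C_3 − tr( Q_S⁻¹ ((a_2 a_3 / a_1) Q_S − I)⁻¹ ), where C_3 = 2·max over single nodes s ∈ V of tr( Q_{{s}}⁻¹ ((a_2 a_3 / a_1) Q_{{s}} − I)⁻¹ ). Then f_3 is non-decreasing and submodular. -/

import Mathlib

open Matrix Polynomial



private lemma entry_mul_nonneg {n : ℕ} {A B : Matrix (Fin n) (Fin n) ℝ}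
    (hA : ∀ i j, 0 ≤ A i j) (hB : ∀ i j, 0 ≤ B i j) (i j : Fin n) :
    0 ≤ (A * B) i j := by
  rw [Matrix.mul_apply]
  exact Finset.sum_nonneg fun k _ => mul_nonneg (hA i k) (hB k j)

private lemma entry_mul_le {n : ℕ} {A A' B B' : Matrix (Fin n) (Fin n) ℝ}
    (hA0 : ∀ i j, 0 ≤ A i j) (hB0 : ∀ i j, 0 ≤ B i j)
    (hA : ∀ i j, A i j ≤ A' i j) (hB : ∀ i j, B i j ≤ B' i j) (i j : Fin n) :
    (A * B) i j ≤ (A' * B') i j := by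
  rw [Matrix.mul_apply, Matrix.mul_apply]
  exact Finset.sum_le_sum fun k _ =>
    mul_le_mul (hA i k) (hB k j) (hB0 k j) (le_trans (hA0 i k) (hA i k))

private lemma trace_le_of_entry {n : ℕ} {A B : Matrix (Fin n) (Fin n) ℝ}
    (h : ∀ i j, A i j ≤ B i j) : A.trace ≤ B.trace := by
  simp only [Matrix.trace, Matrix.diag]
  exact Finset.sum_le_sum fun i _ => h i i

private lemma trace_nonneg_of_entry {n : ℕ} {A : Matrix (Fin n) (Fin n) ℝ}
    (h : ∀ i j, 0 ≤ A i j) : 0 ≤ A.trace := by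
  simp only [Matrix.trace, Matrix.diag]
  exact Finset.sum_nonneg fun i _ => h i i

private lemma resolvent' {n : ℕ} {A B : Matrix (Fin n) (Fin n) ℝ}
    (hA : IsUnit A.det) (hB : IsUnit B.det) :
    A⁻¹ - B⁻¹ = A⁻¹ * (B - A) * B⁻¹ := by
  have h1 : A⁻¹ * B * B⁻¹ = A⁻¹ := by
    rw [Matrix.mul_assoc, Matrix.mul_nonsing_inv B hB, Matrix.mul_one]
  have h2 : A⁻¹ * A * B⁻¹ = B⁻¹ := by
    rw [Matrix.nonsing_inv_mul A hA, Matrix.one_mul]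
  calc A⁻¹ - B⁻¹ = A⁻¹ * B * B⁻¹ - A⁻¹ * A * B⁻¹ := by rw [h1, h2]
    _ = A⁻¹ * (B - A) * B⁻¹ := by rw [Matrix.mul_sub, Matrix.sub_mul]

private lemma delta_identity {n : ℕ} {W X1 X2 U D1 D2 : Matrix (Fin n) (Fin n) ℝ}
    (hW : IsUnit W.det) (hX1 : IsUnit X1.det) (hX2 : IsUnit X2.det) (hU : IsUnit U.det)
    (h1 : X1 - W = D1) (h1' : U - X2 = D1) (h2 : X2 - W = D2) (h2' : U - X1 = D2) :
    W⁻¹.trace + U⁻¹.trace - X1⁻¹.trace - X2⁻¹.trace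
      = (D1 * (X1⁻¹ * (W⁻¹ * D2 * X2⁻¹))).trace
        + (D1 * ((X1⁻¹ * D2 * U⁻¹) * X2⁻¹)).trace := by
  have r1 : W⁻¹ - X1⁻¹ = W⁻¹ * D1 * X1⁻¹ := by rw [resolvent' hW hX1, h1]
  have r2 : X2⁻¹ - U⁻¹ = X2⁻¹ * D1 * U⁻¹ := by rw [resolvent' hX2 hU, h1']
  have r3 : W⁻¹ - X2⁻¹ = W⁻¹ * D2 * X2⁻¹ := by rw [resolvent' hW hX2, h2]
  have r4 : X1⁻¹ - U⁻¹ = X1⁻¹ * D2 * U⁻¹ := by rw [resolvent' hX1 hU, h2']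
  have t1 : (W⁻¹ * D1 * X1⁻¹).trace = (D1 * (X1⁻¹ * W⁻¹)).trace := by
    rw [Matrix.trace_mul_comm (W⁻¹ * D1) X1⁻¹, ← Matrix.mul_assoc,
      Matrix.trace_mul_comm (X1⁻¹ * W⁻¹) D1]
  have t2 : (X2⁻¹ * D1 * U⁻¹).trace = (D1 * (U⁻¹ * X2⁻¹)).trace := by
    rw [Matrix.trace_mul_comm (X2⁻¹ * D1) U⁻¹, ← Matrix.mul_assoc,
      Matrix.trace_mul_comm (U⁻¹ * X2⁻¹) D1]
  have key : X1⁻¹ * W⁻¹ - U⁻¹ * X2⁻¹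
      = X1⁻¹ * (W⁻¹ * D2 * X2⁻¹) + (X1⁻¹ * D2 * U⁻¹) * X2⁻¹ := by
    rw [← r3, ← r4]
    noncomm_ring
  calc W⁻¹.trace + U⁻¹.trace - X1⁻¹.trace - X2⁻¹.trace
      = (W⁻¹ - X1⁻¹).trace - (X2⁻¹ - U⁻¹).trace := by
        rw [Matrix.trace_sub, Matrix.trace_sub]; ring
    _ = (D1 * (X1⁻¹ * W⁻¹)).trace - (D1 * (U⁻¹ * X2⁻¹)).trace := by rw [r1, r2, t1, t2]
    _ = (D1 * (X1⁻¹ * W⁻¹ - U⁻¹ * X2⁻¹)).trace := by rw [Matrix.mul_sub, Matrix.trace_sub]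
    _ = _ := by rw [key, Matrix.mul_add, Matrix.trace_add]

private lemma trace_prod3_mono {n : ℕ} {D A A' B B' : Matrix (Fin n) (Fin n) ℝ}
    (hD : ∀ i j, 0 ≤ D i j)
    (hA0 : ∀ i j, 0 ≤ A i j) (hB0 : ∀ i j, 0 ≤ B i j)
    (hA : ∀ i j, A i j ≤ A' i j) (hB : ∀ i j, B i j ≤ B' i j) :
    (A * D * B).trace ≤ (A' * D * B').trace := by
  refine trace_le_of_entry ?_
  have h1 : ∀ i j, (A * D) i j ≤ (A' * D) i j :=
    entry_mul_le hA0 hD hA (fun i j => le_refl _)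
  have h10 : ∀ i j, 0 ≤ (A * D) i j := entry_mul_nonneg hA0 hD
  exact entry_mul_le h10 hB0 h1 hB

private lemma trace_prod5_mono {n : ℕ} {D1 D2 A A' B B' C C' : Matrix (Fin n) (Fin n) ℝ}
    (hD1 : ∀ i j, 0 ≤ D1 i j) (hD2 : ∀ i j, 0 ≤ D2 i j)
    (hA0 : ∀ i j, 0 ≤ A i j) (hB0 : ∀ i j, 0 ≤ B i j) (hC0 : ∀ i j, 0 ≤ C i j)
    (hA : ∀ i j, A i j ≤ A' i j) (hB : ∀ i j, B i j ≤ B' i j) (hC : ∀ i j, C i j ≤ C' i j) :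
    (D1 * (A * (B * D2 * C))).trace ≤ (D1 * (A' * (B' * D2 * C'))).trace := by
  refine trace_le_of_entry ?_
  have hBD : ∀ i j, 0 ≤ (B * D2) i j := entry_mul_nonneg hB0 hD2
  have hBDC : ∀ i j, 0 ≤ (B * D2 * C) i j := entry_mul_nonneg hBD hC0
  have hBD' : ∀ i j, (B * D2) i j ≤ (B' * D2) i j :=
    entry_mul_le hB0 hD2 hB (fun i j => le_refl _)
  have hBDC' : ∀ i j, (B * D2 * C) i j ≤ (B' * D2 * C') i j :=
    entry_mul_le hBD hC0 hBD' hC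
  have h4 : ∀ i j, (A * (B * D2 * C)) i j ≤ (A' * (B' * D2 * C')) i j :=
    entry_mul_le hA0 hBDC hA hBDC'
  have h40 : ∀ i j, 0 ≤ (A * (B * D2 * C)) i j := entry_mul_nonneg hA0 hBDC
  exact entry_mul_le hD1 h40 (fun i j => le_refl _) h4

private lemma trace_prod5_mono' {n : ℕ} {D1 D2 A A' B B' C C' : Matrix (Fin n) (Fin n) ℝ}
    (hD1 : ∀ i j, 0 ≤ D1 i j) (hD2 : ∀ i j, 0 ≤ D2 i j)
    (hA0 : ∀ i j, 0 ≤ A i j) (hB0 : ∀ i j, 0 ≤ B i j) (hC0 : ∀ i j, 0 ≤ C i j)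
    (hA : ∀ i j, A i j ≤ A' i j) (hB : ∀ i j, B i j ≤ B' i j) (hC : ∀ i j, C i j ≤ C' i j) :
    (D1 * ((A * D2 * B) * C)).trace ≤ (D1 * ((A' * D2 * B') * C')).trace := by
  refine trace_le_of_entry ?_
  have hAD : ∀ i j, 0 ≤ (A * D2) i j := entry_mul_nonneg hA0 hD2
  have hADB : ∀ i j, 0 ≤ (A * D2 * B) i j := entry_mul_nonneg hAD hB0
  have hAD' : ∀ i j, (A * D2) i j ≤ (A' * D2) i j :=
    entry_mul_le hA0 hD2 hA (fun i j => le_refl _)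
  have hADB' : ∀ i j, (A * D2 * B) i j ≤ (A' * D2 * B') i j :=
    entry_mul_le hAD hB0 hAD' hB
  have h4 : ∀ i j, ((A * D2 * B) * C) i j ≤ ((A' * D2 * B') * C') i j :=
    entry_mul_le hADB hC0 hADB' hC
  have h40 : ∀ i j, 0 ≤ ((A * D2 * B) * C) i j := entry_mul_nonneg hADB hC0
  exact entry_mul_le hD1 h40 (fun i j => le_refl _) h4


private lemma inv_entry_nonneg {n : ℕ} {X : Matrix (Fin n) (Fin n) ℝ}
    (hX : X.PosDef) (hoff : ∀ i j, i ≠ j → X i j ≤ 0) (i j : Fin n) :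
    0 ≤ X⁻¹ i j := by
  have hdet : IsUnit X.det := isUnit_iff_ne_zero.mpr hX.det_pos.ne'
  set x : Fin n → ℝ := fun k => X⁻¹ k j with hxdef
  set m : Fin n → ℝ := fun k => max (-(x k)) 0 with hmdef
  set p : Fin n → ℝ := fun k => max (x k) 0 with hpdef
  have hm0 : ∀ k, 0 ≤ m k := fun k => le_max_right _ _
  have hp0 : ∀ k, 0 ≤ p k := fun k => le_max_right _ _
  have hpm : ∀ k, p k - m k = x k := by
    intro k
    rcases le_total (x k) 0 with h | h
    · simp [hpdef, hmdef, max_eq_right h, max_eq_left (neg_nonneg.mpr h)]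
    · simp [hpdef, hmdef, max_eq_left h, max_eq_right (neg_nonpos.mpr h)]
  have hpm0 : ∀ k, p k * m k = 0 := by
    intro k
    rcases le_total (x k) 0 with h | h
    · rw [show p k = 0 from max_eq_right h, zero_mul]
    · rw [show m k = 0 from max_eq_right (neg_nonpos.mpr h), mul_zero]
  suffices hm : m = 0 by
    have h1 := hpm i
    have h2 : m i = 0 := congrFun hm i
    have := hp0 i
    simp only [h2, sub_zero] at h1
    linarith
  by_contra hmne
  have hpos : 0 < m ⬝ᵥ (X *ᵥ m) := by
    have := hX.dotProduct_mulVec_pos hmne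
    simpa using this
  have hXx : X *ᵥ x = fun k => if k = j then (1:ℝ) else 0 := by
    funext k
    have h1 : (X * X⁻¹) k j = (1 : Matrix (Fin n) (Fin n) ℝ) k j := by
      rw [Matrix.mul_nonsing_inv X hdet]
    simpa [Matrix.mul_apply, Matrix.mulVec, dotProduct, Matrix.one_apply, hxdef] using h1
  have hxpm : x = p - m := by
    funext k; exact (hpm k).symm
  have hsplit : m ⬝ᵥ (X *ᵥ x) = m ⬝ᵥ (X *ᵥ p) - m ⬝ᵥ (X *ᵥ m) := by
    rw [hxpm, Matrix.mulVec_sub, dotProduct_sub]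
  have hXp : m ⬝ᵥ (X *ᵥ p) ≤ 0 := by
    rw [dotProduct]
    apply Finset.sum_nonpos
    intro k _
    rw [Matrix.mulVec, dotProduct, Finset.mul_sum]
    apply Finset.sum_nonpos
    intro l _
    by_cases hkl : k = l
    · subst hkl
      have : m k * (X k k * p k) = X k k * (p k * m k) := by ring
      rw [this, hpm0 k, mul_zero]
    · have hX0 := hoff k l hkl
      have : m k * (X k l * p l) = X k l * (m k * p l) := by ring
      rw [this]
      exact mul_nonpos_iff.mpr (Or.inr ⟨hX0, mul_nonneg (hm0 k) (hp0 l)⟩)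
  have hmej : m ⬝ᵥ (X *ᵥ x) = m j := by
    rw [hXx, dotProduct]
    simp
  have hcon : m j = m ⬝ᵥ (X *ᵥ p) - m ⬝ᵥ (X *ᵥ m) := by rw [← hmej, hsplit]
  have := hm0 j
  linarith

private lemma eval_charpoly_eq' {n : ℕ} (M : Matrix (Fin n) (Fin n) ℝ) (r : ℝ) :
    M.charpoly.eval r = (r • (1 : Matrix (Fin n) (Fin n) ℝ) - M).det := by
  have h := RingHom.map_det (Polynomial.evalRingHom r) (Matrix.charmatrix M)
  have h2 : (Matrix.charmatrix M).map (Polynomial.eval r) =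
      r • (1 : Matrix (Fin n) (Fin n) ℝ) - M := by
    ext i j
    by_cases hij : i = j
    · subst hij
      simp [Matrix.charmatrix_apply_eq, Matrix.map_apply, Matrix.one_apply]
    · simp [Matrix.charmatrix_apply_ne _ _ _ hij, Matrix.map_apply,
        Matrix.one_apply_ne hij, hij]
  rw [Matrix.charpoly]
  simpa [h2] using h

private lemma shift_posdef {n : ℕ} {M : Matrix (Fin n) (Fin n) ℝ} {a : ℝ}
    (hM : M.PosDef)
    (h : ∀ lam ∈ M.charpoly.roots, a < lam) :
    (M - a • (1 : Matrix (Fin n) (Fin n) ℝ)).PosDef := by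
  have hroot : ∀ (r : ℝ) (v : Fin n → ℝ), v ≠ 0 → M *ᵥ v = r • v → a < r := by
    intro r v hv hMv
    apply h
    rw [Polynomial.mem_roots']
    refine ⟨(Matrix.charpoly_monic M).ne_zero, ?_⟩
    rw [Polynomial.IsRoot, eval_charpoly_eq']
    rw [← Matrix.exists_mulVec_eq_zero_iff]
    refine ⟨v, hv, ?_⟩
    rw [Matrix.sub_mulVec, Matrix.smul_mulVec, Matrix.one_mulVec, hMv, sub_self]
  have hsm : (a • (1 : Matrix (Fin n) (Fin n) ℝ)).IsHermitian := by
    simp [Matrix.IsHermitian, Matrix.conjTranspose_smul]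
  have hHerm : (M - a • (1 : Matrix (Fin n) (Fin n) ℝ)).IsHermitian :=
    hM.isHermitian.sub hsm
  have heigen : ∀ i, 0 < hHerm.eigenvalues i := by
    intro i
    have hv := hHerm.mulVec_eigenvectorBasis i
    have hvne : (⇑(hHerm.eigenvectorBasis i) : Fin n → ℝ) ≠ 0 := by
      have hne := hHerm.eigenvectorBasis.orthonormal.ne_zero i
      intro hcon
      apply hne
      ext k
      exact congrFun hcon k
    have hMv : M *ᵥ ⇑(hHerm.eigenvectorBasis i)
        = (hHerm.eigenvalues i + a) • ⇑(hHerm.eigenvectorBasis i) := by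
      have h2 : M *ᵥ ⇑(hHerm.eigenvectorBasis i)
          = (M - a • (1 : Matrix (Fin n) (Fin n) ℝ)) *ᵥ ⇑(hHerm.eigenvectorBasis i)
            + a • ⇑(hHerm.eigenvectorBasis i) := by
        rw [Matrix.sub_mulVec, Matrix.smul_mulVec, Matrix.one_mulVec]
        abel
      rw [h2, hv, add_smul]
    have := hroot _ _ hvne hMv
    linarith
  have hPSD := hHerm.posSemidef_iff_eigenvalues_nonneg.mpr (fun i => (heigen i).le)
  refine Matrix.PosDef.of_dotProduct_mulVec_pos hHerm (fun x hx => ?_)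
  rcases (hPSD.dotProduct_mulVec_nonneg x).lt_or_eq with hlt | heq
  · exact hlt
  · exfalso
    have hzero : (M - a • (1 : Matrix (Fin n) (Fin n) ℝ)) *ᵥ x = 0 :=
      (hPSD.dotProduct_mulVec_zero_iff x).mp heq.symm
    have hMx : M *ᵥ x = a • x := by
      have := hzero
      rw [Matrix.sub_mulVec, Matrix.smul_mulVec, Matrix.one_mulVec, sub_eq_zero] at this
      exact this
    exact lt_irrefl a (hroot a x hx hMx)
theorem setFunction_f3_monotone_submodular (n : ℕ) (hn : 1 ≤ n)
    (L : Matrix (Fin n) (Fin n) ℝ)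
    (hLsymm : L.IsSymm)
    (hLoff : ∀ i j, i ≠ j → L i j ≤ 0)
    (hLrow : ∀ i, ∑ j, L i j = 0)
    (hLker : ∀ x : Fin n → ℝ, L.mulVec x = 0 ↔ ∃ c : ℝ, x = fun _ => c)
    (κ : Fin n → ℝ) (hκ : ∀ i, 0 < κ i)
    (Q : Finset (Fin n) → Matrix (Fin n) (Fin n) ℝ)
    (hQdef : ∀ S, Q S = L + Matrix.diagonal fun i => if i ∈ S then κ i else 0)
    (hQpos : ∀ S : Finset (Fin n), S.Nonempty → (Q S).PosDef)
    (a₁ a₂ a₃ : ℝ) (ha₁ : 0 < a₁) (ha₂ : 0 < a₂) (ha₃ : 0 < a₃)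
    (heig : ∀ S : Finset (Fin n), S.Nonempty →
      ∀ lam ∈ (Q S).charpoly.roots, 1 < (a₂ * a₃ / a₁) * lam)
    (mx : ℝ)
    (hmx : IsGreatest {x : ℝ | ∃ s : Fin n, x =
      Matrix.trace ((Q {s})⁻¹ *
        ((a₂ * a₃ / a₁) • Q {s} - (1 : Matrix (Fin n) (Fin n) ℝ))⁻¹)} mx)
    (f₃ : Finset (Fin n) → ℝ)
    (hf0 : f₃ ∅ = 0)
    (hf : ∀ S : Finset (Fin n), S.Nonempty →
      f₃ S = 2 * mx - Matrix.trace ((Q S)⁻¹ *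
        ((a₂ * a₃ / a₁) • Q S - (1 : Matrix (Fin n) (Fin n) ℝ))⁻¹)) :
    (∀ A B : Finset (Fin n), A ⊆ B → f₃ A ≤ f₃ B) ∧
    (∀ A B : Finset (Fin n), f₃ (A ∪ B) + f₃ (A ∩ B) ≤ f₃ A + f₃ B) := by
  classical
  set c : ℝ := a₂ * a₃ / a₁ with hcdef
  have hc : 0 < c := by positivity
  set a : ℝ := c⁻¹ with hadef
  have ha : 0 < a := by positivity
  have hca : c * a = 1 := mul_inv_cancel₀ hc.ne'
  -- positive definiteness of the shifted matrices
  have hXpd : ∀ S : Finset (Fin n), S.Nonempty →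
      (Q S - a • (1 : Matrix (Fin n) (Fin n) ℝ)).PosDef := by
    intro S hS
    refine shift_posdef (hQpos S hS) ?_
    intro lam hlam
    have h1 := heig S hS lam hlam
    have h2 : c * a < c * lam := by linarith
    exact lt_of_mul_lt_mul_left h2 hc.le
  have hQdetU : ∀ S : Finset (Fin n), S.Nonempty → IsUnit (Q S).det :=
    fun S hS => isUnit_iff_ne_zero.mpr (hQpos S hS).det_pos.ne'
  have hXdetU : ∀ S : Finset (Fin n), S.Nonempty →
      IsUnit (Q S - a • (1 : Matrix (Fin n) (Fin n) ℝ)).det :=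
    fun S hS => isUnit_iff_ne_zero.mpr (hXpd S hS).det_pos.ne'
  -- Z-matrix structure
  have hQoff : ∀ (S : Finset (Fin n)) i j, i ≠ j → Q S i j ≤ 0 := by
    intro S i j hij
    rw [hQdef]
    simp only [Matrix.add_apply, Matrix.diagonal_apply_ne _ hij, add_zero]
    exact hLoff i j hij
  have hXoff : ∀ (S : Finset (Fin n)) i j, i ≠ j →
      (Q S - a • (1 : Matrix (Fin n) (Fin n) ℝ)) i j ≤ 0 := by
    intro S i j hij
    simp only [Matrix.sub_apply, Matrix.smul_apply, Matrix.one_apply_ne hij,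
      smul_zero, sub_zero]
    exact hQoff S i j hij
  -- entrywise nonnegativity of the inverses
  have hQinv0 : ∀ S : Finset (Fin n), S.Nonempty → ∀ i j, 0 ≤ (Q S)⁻¹ i j :=
    fun S hS => inv_entry_nonneg (hQpos S hS) (hQoff S)
  have hXinv0 : ∀ S : Finset (Fin n), S.Nonempty → ∀ i j,
      0 ≤ (Q S - a • (1 : Matrix (Fin n) (Fin n) ℝ))⁻¹ i j :=
    fun S hS => inv_entry_nonneg (hXpd S hS) (hXoff S)
  -- the resolvent difference identity for the shift
  have hsmul : ∀ S : Finset (Fin n), S.Nonempty →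
      (Q S - a • (1 : Matrix (Fin n) (Fin n) ℝ))⁻¹ - (Q S)⁻¹
        = a • ((Q S - a • (1 : Matrix (Fin n) (Fin n) ℝ))⁻¹ * (Q S)⁻¹) := by
    intro S hS
    have hres := resolvent' (hXdetU S hS) (hQdetU S hS)
    have hQX : Q S - (Q S - a • (1 : Matrix (Fin n) (Fin n) ℝ)) = a • 1 :=
      sub_sub_cancel _ _
    rw [hQX] at hres
    rw [hres, Matrix.mul_smul, Matrix.mul_one, Matrix.smul_mul]
  -- entrywise comparison between the two inverses
  have hle : ∀ S : Finset (Fin n), S.Nonempty → ∀ i j,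
      (Q S)⁻¹ i j ≤ (Q S - a • (1 : Matrix (Fin n) (Fin n) ℝ))⁻¹ i j := by
    intro S hS i j
    have hres2 := hsmul S hS
    have h0 : 0 ≤ (a • ((Q S - a • (1 : Matrix (Fin n) (Fin n) ℝ))⁻¹ * (Q S)⁻¹)) i j := by
      have hmn := entry_mul_nonneg (hXinv0 S hS) (hQinv0 S hS) i j
      simp only [Matrix.smul_apply, smul_eq_mul]
      exact mul_nonneg ha.le hmn
    have hcf := congrFun (congrFun hres2 i) j
    simp only [Matrix.sub_apply] at hcf
    linarith [hcf, h0]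
  -- the g function
  set gv : Finset (Fin n) → ℝ := fun S =>
    ((Q S - a • (1 : Matrix (Fin n) (Fin n) ℝ))⁻¹).trace - ((Q S)⁻¹).trace with hgv
  have hgdef : ∀ S : Finset (Fin n), S.Nonempty →
      Matrix.trace ((Q S)⁻¹ * (c • Q S - (1 : Matrix (Fin n) (Fin n) ℝ))⁻¹) = gv S := by
    intro S hS
    have hX1 : c • Q S - (1 : Matrix (Fin n) (Fin n) ℝ)
        = c • (Q S - a • (1 : Matrix (Fin n) (Fin n) ℝ)) := by
      rw [smul_sub, smul_smul, hca, one_smul]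
    have hinv : (c • (Q S - a • (1 : Matrix (Fin n) (Fin n) ℝ)))⁻¹
        = a • (Q S - a • (1 : Matrix (Fin n) (Fin n) ℝ))⁻¹ := by
      apply Matrix.inv_eq_right_inv
      rw [Matrix.smul_mul, Matrix.mul_smul, Matrix.mul_nonsing_inv _ (hXdetU S hS),
        smul_smul, hca, one_smul]
    have htr : ((Q S - a • (1 : Matrix (Fin n) (Fin n) ℝ))⁻¹).trace - ((Q S)⁻¹).trace
        = a * (((Q S)⁻¹ * (Q S - a • (1 : Matrix (Fin n) (Fin n) ℝ))⁻¹)).trace := by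
      rw [← Matrix.trace_sub, hsmul S hS]
      rw [Matrix.trace_smul, smul_eq_mul,
        Matrix.trace_mul_comm ((Q S - a • (1 : Matrix (Fin n) (Fin n) ℝ))⁻¹) ((Q S)⁻¹)]
    calc Matrix.trace ((Q S)⁻¹ * (c • Q S - (1 : Matrix (Fin n) (Fin n) ℝ))⁻¹)
        = Matrix.trace ((Q S)⁻¹ * (a • (Q S - a • (1 : Matrix (Fin n) (Fin n) ℝ))⁻¹)) := by
          rw [hX1, hinv]
      _ = a * (((Q S)⁻¹ * (Q S - a • (1 : Matrix (Fin n) (Fin n) ℝ))⁻¹)).trace := by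
          rw [Matrix.mul_smul, Matrix.trace_smul, smul_eq_mul]
      _ = gv S := by rw [hgv]; simp only []; rw [htr]
  have hgv0 : ∀ S : Finset (Fin n), S.Nonempty → 0 ≤ gv S := by
    intro S hS
    have h1 : 0 ≤ (((Q S - a • (1 : Matrix (Fin n) (Fin n) ℝ))⁻¹ * (Q S)⁻¹)).trace :=
      trace_nonneg_of_entry (entry_mul_nonneg (hXinv0 S hS) (hQinv0 S hS))
    have h2 : gv S = a * (((Q S - a • (1 : Matrix (Fin n) (Fin n) ℝ))⁻¹ * (Q S)⁻¹)).trace := by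
      rw [hgv]; simp only []; rw [← Matrix.trace_sub, hsmul S hS, Matrix.trace_smul, smul_eq_mul]
    rw [h2]
    exact mul_nonneg ha.le h1
  have hfg : ∀ S : Finset (Fin n), S.Nonempty → f₃ S = 2 * mx - gv S := by
    intro S hS
    rw [hf S hS, hgdef S hS]
  -- entrywise nonnegativity of the Q-differences
  have hDiff0 : ∀ (S T : Finset (Fin n)), S ⊆ T → ∀ i j, 0 ≤ (Q T - Q S) i j := by
    intro S T hST i j
    rw [hQdef, hQdef]
    by_cases hij : i = j
    · subst hij
      simp only [Matrix.sub_apply, Matrix.add_apply, Matrix.diagonal_apply_eq]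
      by_cases h1 : i ∈ S
      · simp [h1, hST h1]
      · by_cases h2 : i ∈ T <;> simp [h1, h2, (hκ i).le]
    · simp [Matrix.sub_apply, Matrix.add_apply, Matrix.diagonal_apply_ne _ hij]
  -- core monotonicity
  have hmono_core : ∀ A B : Finset (Fin n), A.Nonempty → A ⊆ B → gv B ≤ gv A := by
    intro A B hAne hAB
    have hBne : B.Nonempty := hAne.mono hAB
    have eq1 : ((Q A)⁻¹).trace - ((Q B)⁻¹).trace
        = ((Q A)⁻¹ * (Q B - Q A) * (Q B)⁻¹).trace := by
      rw [← Matrix.trace_sub, resolvent' (hQdetU A hAne) (hQdetU B hBne)]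
    have hXdiff : (Q B - a • (1 : Matrix (Fin n) (Fin n) ℝ))
        - (Q A - a • (1 : Matrix (Fin n) (Fin n) ℝ)) = Q B - Q A :=
      sub_sub_sub_cancel_right _ _ _
    have eq2 : ((Q A - a • (1 : Matrix (Fin n) (Fin n) ℝ))⁻¹).trace
        - ((Q B - a • (1 : Matrix (Fin n) (Fin n) ℝ))⁻¹).trace
        = ((Q A - a • (1 : Matrix (Fin n) (Fin n) ℝ))⁻¹ * (Q B - Q A)
            * (Q B - a • (1 : Matrix (Fin n) (Fin n) ℝ))⁻¹).trace := by
      rw [← Matrix.trace_sub, resolvent' (hXdetU A hAne) (hXdetU B hBne), hXdiff]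
    have hcmp := trace_prod3_mono (hDiff0 A B hAB) (hQinv0 A hAne) (hQinv0 B hBne)
      (hle A hAne) (hle B hBne)
    rw [hgv]
    simp only []
    linarith
  -- gv S ≤ mx for nonempty S
  have hg_le_mx : ∀ S : Finset (Fin n), S.Nonempty → gv S ≤ mx := by
    intro S hS
    obtain ⟨s, hs⟩ := hS
    have h1 : gv S ≤ gv {s} := hmono_core {s} S (Finset.singleton_nonempty s)
      (Finset.singleton_subset_iff.mpr hs)
    have h3 := hmx.2 ⟨s, rfl⟩
    rw [hgdef {s} (Finset.singleton_nonempty s)] at h3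
    linarith
  have hmx0 : 0 ≤ mx := by
    obtain ⟨s, hs⟩ := hmx.1
    rw [hgdef {s} (Finset.singleton_nonempty s)] at hs
    rw [hs]
    exact hgv0 {s} (Finset.singleton_nonempty s)
  -- core submodularity
  have hsub_core : ∀ A B : Finset (Fin n), (A ∩ B).Nonempty →
      gv A + gv B ≤ gv (A ∪ B) + gv (A ∩ B) := by
    intro A B hI
    have hAne : A.Nonempty := hI.mono Finset.inter_subset_left
    have hBne : B.Nonempty := hI.mono Finset.inter_subset_right
    have hUne : (A ∪ B).Nonempty := hAne.mono Finset.subset_union_left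
    have hkey : ∀ i : Fin n, (if i ∈ A ∪ B then κ i else 0) - (if i ∈ B then κ i else 0)
        = (if i ∈ A then κ i else 0) - (if i ∈ A ∩ B then κ i else 0) := by
      intro i
      by_cases h1 : i ∈ A <;> by_cases h2 : i ∈ B <;>
        simp [Finset.mem_union, Finset.mem_inter, h1, h2]
    have hkey2 : ∀ i : Fin n, (if i ∈ A ∪ B then κ i else 0) - (if i ∈ A then κ i else 0)
        = (if i ∈ B then κ i else 0) - (if i ∈ A ∩ B then κ i else 0) := by
      intro i
      by_cases h1 : i ∈ A <;> by_cases h2 : i ∈ B <;>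
        simp [Finset.mem_union, Finset.mem_inter, h1, h2]
    have hQeq : ∀ (S T S' T' : Finset (Fin n)),
        (∀ i, (if i ∈ T then κ i else 0) - (if i ∈ S then κ i else 0)
          = (if i ∈ T' then κ i else 0) - (if i ∈ S' then κ i else 0)) →
        Q T - Q S = Q T' - Q S' := by
      intro S T S' T' h
      rw [hQdef, hQdef, hQdef, hQdef]
      ext i j
      by_cases hij : i = j
      · subst hij
        simp only [Matrix.sub_apply, Matrix.add_apply, Matrix.diagonal_apply_eq]
        linarith [h i]
      · simp [Matrix.sub_apply, Matrix.add_apply, Matrix.diagonal_apply_ne _ hij]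
    have h1' : Q (A ∪ B) - Q B = Q A - Q (A ∩ B) := hQeq B (A ∪ B) (A ∩ B) A hkey
    have h2' : Q (A ∪ B) - Q A = Q B - Q (A ∩ B) := hQeq A (A ∪ B) (A ∩ B) B hkey2
    set D1 := Q A - Q (A ∩ B) with hD1def
    set D2 := Q B - Q (A ∩ B) with hD2def
    have hD10 : ∀ i j, 0 ≤ D1 i j := hDiff0 (A ∩ B) A Finset.inter_subset_left
    have hD20 : ∀ i j, 0 ≤ D2 i j := hDiff0 (A ∩ B) B Finset.inter_subset_right
    have hd0 := delta_identity (hQdetU _ hI) (hQdetU _ hAne) (hQdetU _ hBne)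
      (hQdetU _ hUne) hD1def.symm h1' hD2def.symm h2'
    have s1 : (Q A - a • (1 : Matrix (Fin n) (Fin n) ℝ))
        - (Q (A ∩ B) - a • (1 : Matrix (Fin n) (Fin n) ℝ)) = D1 := by
      rw [sub_sub_sub_cancel_right, hD1def]
    have s1' : (Q (A ∪ B) - a • (1 : Matrix (Fin n) (Fin n) ℝ))
        - (Q B - a • (1 : Matrix (Fin n) (Fin n) ℝ)) = D1 := by
      rw [sub_sub_sub_cancel_right, h1']
    have s2 : (Q B - a • (1 : Matrix (Fin n) (Fin n) ℝ))
        - (Q (A ∩ B) - a • (1 : Matrix (Fin n) (Fin n) ℝ)) = D2 := by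
      rw [sub_sub_sub_cancel_right, hD2def]
    have s2' : (Q (A ∪ B) - a • (1 : Matrix (Fin n) (Fin n) ℝ))
        - (Q A - a • (1 : Matrix (Fin n) (Fin n) ℝ)) = D2 := by
      rw [sub_sub_sub_cancel_right, h2']
    have hda := delta_identity (hXdetU _ hI) (hXdetU _ hAne) (hXdetU _ hBne)
      (hXdetU _ hUne) s1 s1' s2 s2'
    have hc1 := trace_prod5_mono hD10 hD20 (hQinv0 A hAne) (hQinv0 (A ∩ B) hI)
      (hQinv0 B hBne) (hle A hAne) (hle (A ∩ B) hI) (hle B hBne)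
    have hc2 := trace_prod5_mono' hD10 hD20 (hQinv0 A hAne) (hQinv0 (A ∪ B) hUne)
      (hQinv0 B hBne) (hle A hAne) (hle (A ∪ B) hUne) (hle B hBne)
    rw [hgv]
    simp only []
    linarith
  -- conclusion
  constructor
  · intro A B hAB
    by_cases hA : A.Nonempty
    · have hB : B.Nonempty := hA.mono hAB
      rw [hfg A hA, hfg B hB]
      have := hmono_core A B hA hAB
      linarith
    · have hAe : A = ∅ := Finset.not_nonempty_iff_eq_empty.mp hA
      rw [hAe, hf0]
      by_cases hB : B.Nonempty
      · rw [hfg B hB]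
        have := hg_le_mx B hB
        linarith
      · have hBe : B = ∅ := Finset.not_nonempty_iff_eq_empty.mp hB
        rw [hBe, hf0]
  · intro A B
    by_cases hA : A.Nonempty
    · by_cases hB : B.Nonempty
      · by_cases hI : (A ∩ B).Nonempty
        · have hU : (A ∪ B).Nonempty := hA.mono Finset.subset_union_left
          rw [hfg A hA, hfg B hB, hfg _ hU, hfg _ hI]
          have := hsub_core A B hI
          linarith
        · have hIe : A ∩ B = ∅ := Finset.not_nonempty_iff_eq_empty.mp hI
          have hU : (A ∪ B).Nonempty := hA.mono Finset.subset_union_left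
          rw [hIe, hf0, hfg A hA, hfg B hB, hfg _ hU]
          have h1 := hg_le_mx A hA
          have h2 := hg_le_mx B hB
          have h3 := hgv0 _ hU
          linarith
      · have hBe : B = ∅ := Finset.not_nonempty_iff_eq_empty.mp hB
        rw [hBe]
        simp [hf0]
    · have hAe : A = ∅ := Finset.not_nonempty_iff_eq_empty.mp hA
      rw [hAe]
      simp [hf0]
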